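/- arXiv:2502.04652 — 7 statements merged into one kernel-verified Lean document; each statement's English description precedes it below -/
import Mathlib

section
/- Let A, B, X, R be real n×n matrices, let m be the index of A, and set S = Σ_{i=1}^{m} A^{m-i} B A^{i-1}. The dual matrix X + εR satisfies the three dual core-EP equations ((Â X̂)^T = Â X̂, Â X̂² = X̂, X̂ Â^{m+1} = Â^m) for Â = A + εB if and only if X equals the (real) core-EP inverse A^⊕ of A and R satisfies the three real-matrix equations: (AR + B A^⊕)^T = AR + B A^⊕; B (A^⊕)² + A A^⊕ R + A R A^⊕ = R; and R A^{m+1} + A^⊕ A S + A^⊕ B A^m = S. -/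
open Matrix

abbrev Mat (n : ℕ) := Matrix (Fin n) (Fin n) ℝ

/-- A dual matrix `A + ε B` represented as the pair `(A, B)`. -/
abbrev DM (n : ℕ) := Mat n × Mat n

/-- Dual matrix multiplication: `(A+εB)(C+εD) = AC + ε(AD+BC)`. -/
def dmul {n : ℕ} (X Y : DM n) : DM n := (X.1 * Y.1, X.1 * Y.2 + X.2 * Y.1)

/-- Componentwise transpose of a dual matrix. -/
def dT {n : ℕ} (X : DM n) : DM n := (X.1ᵀ, X.2ᵀ)

/-- Powers of a dual matrix. -/
def dpow {n : ℕ} (X : DM n) : ℕ → DM n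
  | 0 => (1, 0)
  | k+1 => dmul X (dpow X k)

/-- `m` is the index of `A`: the least `m` with `rank (A^(m+1)) = rank (A^m)`. -/
def MatIndex {n : ℕ} (A : Mat n) (m : ℕ) : Prop :=
  (A ^ (m+1)).rank = (A ^ m).rank ∧ ∀ k < m, (A ^ (k+1)).rank ≠ (A ^ k).rank

/-- `X` is the core-EP inverse of `A` (with `m` the index of `A`). -/
def IsCEP {n : ℕ} (m : ℕ) (A X : Mat n) : Prop :=
  (A * X)ᵀ = A * X ∧ A * (X * X) = X ∧ X * A ^ (m+1) = A ^ m

/-- `Xh` is a dual core-EP inverse of the dual matrix `Ah`. -/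
def IsDualCEP {n : ℕ} (m : ℕ) (Ah Xh : DM n) : Prop :=
  dT (dmul Ah Xh) = dmul Ah Xh ∧ dmul Ah (dmul Xh Xh) = Xh ∧
    dmul Xh (dpow Ah (m+1)) = dpow Ah m

lemma dpow_pair {n : ℕ} (A B : Mat n) (k : ℕ) :
    dpow (A, B) k = (A ^ k, ∑ i ∈ Finset.range k, A ^ (k - 1 - i) * B * A ^ i) := by
  induction k with
  | zero => simp [dpow]
  | succ k ih =>
    rw [dpow, ih, dmul]
    refine Prod.ext ?_ ?_
    · simp [pow_succ']
    · simp only [Finset.sum_range_succ, Finset.mul_sum]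
      have h1 : ∀ i ∈ Finset.range k,
          A * (A ^ (k - 1 - i) * B * A ^ i) = A ^ (k + 1 - 1 - i) * B * A ^ i := by
        intro i hi
        simp only [Finset.mem_range] at hi
        have : k + 1 - 1 - i = (k - 1 - i) + 1 := by omega
        rw [this, pow_succ']; noncomm_ring
      rw [Finset.sum_congr rfl h1]
      have : k + 1 - 1 - k = 0 := by omega
      simp [this]

theorem stmt0 {n m : ℕ} (A B X R : Mat n) (hm : MatIndex A m)
    (S : Mat n) (hS : S = ∑ i ∈ Finset.range m, A ^ (m - 1 - i) * B * A ^ i) :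
    IsDualCEP m (A, B) (X, R) ↔
      (IsCEP m A X ∧
        (A * R + B * X)ᵀ = A * R + B * X ∧
        B * (X * X) + A * X * R + A * R * X = R ∧
        R * A ^ (m+1) + X * A * S + X * B * A ^ m = S) := by
  have hpow := dpow_pair A B
  have hS1 : (∑ i ∈ Finset.range (m+1), A ^ (m + 1 - 1 - i) * B * A ^ i)
      = A * S + B * A ^ m := by
    rw [hS, Finset.sum_range_succ, Finset.mul_sum]
    congr 1
    · refine Finset.sum_congr rfl fun i hi => ?_
      simp only [Finset.mem_range] at hi
      have : m + 1 - 1 - i = (m - 1 - i) + 1 := by omega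
      rw [this, pow_succ']; noncomm_ring
    · have : m + 1 - 1 - m = 0 := by omega
      simp [this]
  simp only [IsDualCEP, IsCEP, dmul, dT, hpow, hS1, ← hS, Prod.ext_iff, Prod.mk.injEq]
  have e1 : B * (X * X) + A * X * R + A * R * X = A * (X * R + R * X) + B * (X * X) := by
    noncomm_ring
  have e2 : R * A ^ (m+1) + X * A * S + X * B * A ^ m
      = X * (A * S + B * A ^ m) + R * A ^ (m + 1) := by
    noncomm_ring
  rw [e1, e2]
  tauto
end

section
/- Let Â = A + εB be a dual real n×n matrix with index of A equal to m. If X̂₁ and X̂₂ are both dual core-EP inverses of Â (i.e., both satisfy (Â X̂)^T = Â X̂, Â X̂² = X̂, and X̂ Â^{m+1} = Â^m), then X̂₁ = X̂₂. That is, the dual core-EP inverse is unique whenever it exists. -/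
open Matrix

lemma f1 {n : ℕ} (A X : Mat n) (hr : A * (X * X) = X) (k : ℕ) :
    A ^ k * (X * X ^ k) = X := by
  induction k with
  | zero => simp
  | succ k ih =>
    calc A ^ (k+1) * (X * X ^ (k+1)) = A * (A ^ k * (X * X ^ k) * X) := by
          rw [pow_succ' A, pow_succ X]; simp only [mul_assoc]
      _ = A * (X * X) := by rw [ih]
      _ = X := hr

lemma f2 {n : ℕ} (A X : Mat n) (hr : A * (X * X) = X) (k : ℕ) :
    A * X = A ^ (k+1) * (X * X ^ k) := by
  conv_lhs => rw [← f1 A X hr k]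
  rw [pow_succ' A]; simp only [mul_assoc]

lemma f3 {n m : ℕ} (A X : Mat n) (hr : A * (X * X) = X)
    (hp : X * A ^ (m+1) = A ^ m) : X * (A * X) = X := by
  calc X * (A * X) = X * (A ^ (m+1) * (X * X ^ m)) := by rw [← f2 A X hr m]
    _ = X * A ^ (m+1) * (X * X ^ m) := by rw [mul_assoc]
    _ = A ^ m * (X * X ^ m) := by rw [hp]
    _ = X := f1 A X hr m

lemma cep_unique {n m : ℕ} (A X Y : Mat n)
    (hsX : (A * X)ᵀ = A * X) (hrX : A * (X * X) = X) (hpX : X * A ^ (m+1) = A ^ m)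
    (hsY : (A * Y)ᵀ = A * Y) (hrY : A * (Y * Y) = Y) (hpY : Y * A ^ (m+1) = A ^ m) :
    X = Y := by
  have hP12 : (A * X) * (A * Y) = A * Y := by
    calc (A * X) * (A * Y) = (A * X) * (A ^ (m+1) * (Y * Y ^ m)) := by rw [← f2 A Y hrY m]
      _ = A * (X * A ^ (m+1)) * (Y * Y ^ m) := by simp only [mul_assoc]
      _ = A * A ^ m * (Y * Y ^ m) := by rw [hpX]
      _ = A ^ (m+1) * (Y * Y ^ m) := by rw [← pow_succ']
      _ = A * Y := (f2 A Y hrY m).symm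
  have hP21 : (A * Y) * (A * X) = A * X := by
    calc (A * Y) * (A * X) = (A * Y) * (A ^ (m+1) * (X * X ^ m)) := by rw [← f2 A X hrX m]
      _ = A * (Y * A ^ (m+1)) * (X * X ^ m) := by simp only [mul_assoc]
      _ = A * A ^ m * (X * X ^ m) := by rw [hpY]
      _ = A ^ (m+1) * (X * X ^ m) := by rw [← pow_succ']
      _ = A * X := (f2 A X hrX m).symm
  have hPP : A * X = A * Y := by
    have : A * Y = A * X :=
      calc A * Y = (A * Y)ᵀ := hsY.symm
        _ = ((A * X) * (A * Y))ᵀ := by rw [hP12]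
        _ = (A * Y)ᵀ * (A * X)ᵀ := transpose_mul _ _
        _ = (A * Y) * (A * X) := by rw [hsX, hsY]
        _ = A * X := hP21
    exact this.symm
  calc X = X * (A * X) := (f3 A X hrX hpX).symm
    _ = X * (A * Y) := by rw [hPP]
    _ = X * (A ^ (m+1) * (Y * Y ^ m)) := by rw [← f2 A Y hrY m]
    _ = X * A ^ (m+1) * (Y * Y ^ m) := by rw [mul_assoc]
    _ = A ^ m * (Y * Y ^ m) := by rw [hpX]
    _ = Y := f1 A Y hrY m

lemma tmul_self_zero {n : ℕ} (W : Mat n) (h : Wᵀ * W = 0) : W = 0 := by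
  ext i j
  have hd : (Wᵀ * W) j j = 0 := by rw [h]; rfl
  rw [Matrix.mul_apply] at hd
  simp only [Matrix.transpose_apply] at hd
  have : ∀ k ∈ Finset.univ, (0:ℝ) ≤ W k j * W k j := fun k _ => mul_self_nonneg _
  have := (Finset.sum_eq_zero_iff_of_nonneg this).mp hd i (Finset.mem_univ i)
  have := mul_self_eq_zero.mp this
  simpa using this

lemma mat_eq_zero_of_mulVec {n : ℕ} (Z : Mat n) (h : ∀ u, Z *ᵥ u = 0) : Z = 0 := by
  ext i j
  have := congrFun (h (Pi.single j 1)) i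
  rw [Matrix.mulVec_single_one] at this
  simpa using this

-- kernel stabilization from rank equality
lemma ker_step {n m : ℕ} (A : Mat n) (hm : (A ^ (m+1)).rank = (A ^ m).rank) :
    ∀ u, A ^ (m+1) *ᵥ u = 0 → A ^ m *ᵥ u = 0 := by
  have hle : LinearMap.ker (A ^ m).mulVecLin ≤ LinearMap.ker (A ^ (m+1)).mulVecLin := by
    intro u hu
    simp only [LinearMap.mem_ker, Matrix.mulVecLin_apply] at hu ⊢
    rw [pow_succ', ← Matrix.mulVec_mulVec, hu, Matrix.mulVec_zero]
  have h1 := LinearMap.finrank_range_add_finrank_ker (A ^ (m+1)).mulVecLin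
  have h2 := LinearMap.finrank_range_add_finrank_ker (A ^ m).mulVecLin
  have hr : Matrix.rank (A ^ (m+1)) =
      Module.finrank ℝ (LinearMap.range (A ^ (m+1)).mulVecLin) := rfl
  have hr2 : Matrix.rank (A ^ m) =
      Module.finrank ℝ (LinearMap.range (A ^ m).mulVecLin) := rfl
  have heq : LinearMap.ker (A ^ m).mulVecLin = LinearMap.ker (A ^ (m+1)).mulVecLin := by
    apply Submodule.eq_of_le_of_finrank_le hle
    omega
  intro u hu
  have : u ∈ LinearMap.ker (A ^ (m+1)).mulVecLin := by
    simpa [Matrix.mulVecLin_apply] using hu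
  rw [← heq] at this
  simpa [Matrix.mulVecLin_apply] using this

lemma dual_zero {n m : ℕ} (A X Z : Mat n)
    (hrank : (A ^ (m+1)).rank = (A ^ m).rank)
    (hs : (A * X)ᵀ = A * X) (hr : A * (X * X) = X) (hp : X * A ^ (m+1) = A ^ m)
    (hZs : (A * Z)ᵀ = A * Z) (hZr : A * (X * Z) + A * (Z * X) = Z)
    (hZp : Z * A ^ (m+1) = 0) : Z = 0 := by
  -- Step 1: A * (Z * A^m) = 0
  have h1 : A * (X * Z) * A ^ (m+1) + A * (Z * X) * A ^ (m+1) = 0 := by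
    rw [← add_mul, hZr, hZp]
  have h2 : A * (X * Z) * A ^ (m+1) = 0 := by
    calc A * (X * Z) * A ^ (m+1) = A * (X * (Z * A ^ (m+1))) := by simp only [mul_assoc]
      _ = 0 := by rw [hZp, mul_zero, mul_zero]
  have h3 : A * (Z * X) * A ^ (m+1) = A * (Z * A ^ m) := by
    calc A * (Z * X) * A ^ (m+1) = A * (Z * (X * A ^ (m+1))) := by simp only [mul_assoc]
      _ = A * (Z * A ^ m) := by rw [hp]
  have hAZAm : A * (Z * A ^ m) = 0 := by
    rw [h2, h3, zero_add] at h1; exact h1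
  -- Step 2: A * (Z * X) = 0
  have e : Z * X = Z * (A ^ m * (X * X ^ m)) := by rw [f1 A X hr m]
  have hAZX : A * (Z * X) = 0 := by
    calc A * (Z * X) = A * (Z * A ^ m) * (X * X ^ m) := by rw [e]; simp only [mul_assoc]
      _ = 0 := by rw [hAZAm, zero_mul]
  -- Step 3: Z = A * (X * Z)
  have hZ : A * (X * Z) = Z := by
    conv_rhs => rw [← hZr]
    rw [hAZX, add_zero]
  -- Step 4: Z = A^(m+1) * C with C := X * X^m * Z
  set C := X * X ^ m * Z with hC
  have hZC : Z = A ^ (m+1) * C := by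
    calc Z = A * X * Z := by rw [mul_assoc, hZ]
      _ = A ^ (m+1) * (X * X ^ m) * Z := by rw [← f2 A X hr m]
      _ = A ^ (m+1) * C := by rw [hC, mul_assoc]
  -- Step 5: (Aᵀ)^m * (A * Z) = 0
  have h4 : A * Z * A ^ m = 0 := by rw [mul_assoc]; exact hAZAm
  have hTm : (Aᵀ) ^ m * (A * Z) = 0 := by
    have h5 := congrArg Matrix.transpose h4
    rw [transpose_mul, transpose_pow, hZs, transpose_zero] at h5
    exact h5
  -- Step 6: A * Z = 0
  have hp2 : A ^ (m+2) = A * A ^ (m+1) := pow_succ' A (m+1)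
  have hWdef : A * Z = A ^ (m+2) * C := by
    conv_lhs => rw [hZC]
    rw [hp2, mul_assoc]
  have hsplit : (Aᵀ) ^ (m+2) = (Aᵀ) ^ 2 * (Aᵀ) ^ m := by
    rw [← pow_add, Nat.add_comm]
  have key : (A * Z)ᵀ * (A * Z) = 0 := by
    nth_rewrite 1 [hWdef]
    rw [transpose_mul, transpose_pow, hsplit]
    calc Cᵀ * ((Aᵀ) ^ 2 * (Aᵀ) ^ m) * (A * Z)
        = Cᵀ * ((Aᵀ) ^ 2 * ((Aᵀ) ^ m * (A * Z))) := by simp only [mul_assoc]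
      _ = 0 := by rw [hTm, mul_zero, mul_zero]
  have hW : A * Z = 0 := tmul_self_zero _ key
  -- Step 7/8: kernel argument
  have hAC : A ^ (m+2) * C = 0 := by rw [← hWdef]; exact hW
  have kerstep := ker_step A hrank
  have hker2 : ∀ v, A ^ (m+2) *ᵥ v = 0 → A ^ (m+1) *ᵥ v = 0 := by
    intro v hv
    have e1 : A ^ (m+2) *ᵥ v = A ^ (m+1) *ᵥ (A *ᵥ v) := by
      rw [Matrix.mulVec_mulVec, ← pow_succ]
    rw [e1] at hv
    have := kerstep _ hv
    rw [Matrix.mulVec_mulVec, ← pow_succ] at this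
    exact this
  apply mat_eq_zero_of_mulVec
  intro u
  have hv : A ^ (m+2) *ᵥ (C *ᵥ u) = 0 := by
    rw [Matrix.mulVec_mulVec, hAC, Matrix.zero_mulVec]
  have := hker2 _ hv
  rw [hZC, ← Matrix.mulVec_mulVec, this]  -- goal: Z *ᵥ u = 0

lemma dpow_fst {n : ℕ} (A B : Mat n) : ∀ k, (dpow (A, B) k).1 = A ^ k
  | 0 => by simp [dpow]
  | k+1 => by
      show (dmul (A, B) (dpow (A, B) k)).1 = A ^ (k+1)
      rw [dmul, dpow_fst A B k]
      exact (pow_succ' A k).symm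

theorem stmt1 {n m : ℕ} (A B : Mat n) (hm : MatIndex A m)
    (X1 X2 : DM n) (h1 : IsDualCEP m (A, B) X1) (h2 : IsDualCEP m (A, B) X2) :
    X1 = X2 := by
  obtain ⟨Xa, Ya⟩ := X1
  obtain ⟨Xb, Yb⟩ := X2
  obtain ⟨h1s, h1r, h1p⟩ := h1
  obtain ⟨h2s, h2r, h2p⟩ := h2
  simp only [Prod.ext_iff, dmul, dT, dpow_fst] at h1s h1r h1p h2s h2r h2p
  obtain ⟨h1s1, h1s2⟩ := h1s
  obtain ⟨h1r1, h1r2⟩ := h1r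
  obtain ⟨h1p1, h1p2⟩ := h1p
  obtain ⟨h2s1, h2s2⟩ := h2s
  obtain ⟨h2r1, h2r2⟩ := h2r
  obtain ⟨h2p1, h2p2⟩ := h2p
  -- real parts coincide
  have hX : Xa = Xb := cep_unique A Xa Xb h1s1 h1r1 h1p1 h2s1 h2r1 h2p1
  subst hX
  -- dual part
  have hZs : (A * (Ya - Yb))ᵀ = A * (Ya - Yb) := by
    have hd : (A * Ya + B * Xa)ᵀ - (A * Yb + B * Xa)ᵀ
        = (A * Ya + B * Xa) - (A * Yb + B * Xa) := by rw [h1s2, h2s2]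
    rw [transpose_add, transpose_add, add_sub_add_right_eq_sub,
      add_sub_add_right_eq_sub] at hd
    rw [mul_sub, transpose_sub]
    exact hd
  have hZr : A * (Xa * (Ya - Yb)) + A * ((Ya - Yb) * Xa) = Ya - Yb := by
    have hd : (A * (Xa * Ya + Ya * Xa) + B * (Xa * Xa))
        - (A * (Xa * Yb + Yb * Xa) + B * (Xa * Xa)) = Ya - Yb := by rw [h1r2, h2r2]
    rw [add_sub_add_right_eq_sub, ← mul_sub] at hd
    calc A * (Xa * (Ya - Yb)) + A * ((Ya - Yb) * Xa)
        = A * ((Xa * Ya + Ya * Xa) - (Xa * Yb + Yb * Xa)) := by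
          rw [← mul_add]; congr 1; noncomm_ring
      _ = Ya - Yb := hd
  have hZp : (Ya - Yb) * A ^ (m+1) = 0 := by
    have hd : (Xa * (dpow (A, B) (m+1)).2 + Ya * A ^ (m+1))
        - (Xa * (dpow (A, B) (m+1)).2 + Yb * A ^ (m+1)) = 0 := by
      rw [h1p2, h2p2, sub_self]
    rw [add_sub_add_left_eq_sub, ← sub_mul] at hd
    exact hd
  have hZ0 : Ya - Yb = 0 :=
    dual_zero A Xa (Ya - Yb) hm.1 h1s1 h1r1 h1p1 hZs hZr hZp
  have : Ya = Yb := sub_eq_zero.mp hZ0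
  rw [this]
end

section
/- There exists a dual real square matrix that admits no dual core-EP inverse. Concretely, for A = [[1,2,-2],[0,0,-2],[0,0,0]] and B = [[1,5,-2],[0,3,-2],[2,0,4]], the dual matrix Â = A + εB has no dual core-EP inverse. -/
open Matrix

section aux

local notation "A₀" => (!![1, 2, -2; 0, 0, -2; 0, 0, 0] : Mat 3)
local notation "B₀" => (!![1, 5, -2; 0, 3, -2; 2, 0, 4] : Mat 3)

lemma rankA_le : (A₀).rank ≤ 2 := by
  have h : A₀ = (!![1,0;0,1;0,0] : Matrix (Fin 3) (Fin 2) ℝ) *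
      (!![1,2,-2;0,0,-2] : Matrix (Fin 2) (Fin 3) ℝ) := by
    ext i j; fin_cases i <;> fin_cases j <;>
      simp [Matrix.mul_apply, Fin.sum_univ_two, Matrix.vecHead, Matrix.vecTail]
  calc (A₀).rank ≤ (!![1,2,-2;0,0,-2] : Matrix (Fin 2) (Fin 3) ℝ).rank := by
        rw [h]; exact Matrix.rank_mul_le_right _ _
    _ ≤ 2 := by simpa using Matrix.rank_le_card_height (!![1,2,-2;0,0,-2] : Matrix (Fin 2) (Fin 3) ℝ)

lemma rankD2 : (Matrix.diagonal ![(1:ℝ),1,0]).rank = 2 := by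
  rw [Matrix.rank_diagonal]
  rw [Fintype.card_subtype]
  rw [show (Finset.univ : Finset (Fin 3)) = {0, 1, 2} from rfl]
  rw [Finset.filter_insert, Finset.filter_insert, Finset.filter_singleton]
  norm_num [Matrix.cons_val_two]

lemma rankA_ge : 2 ≤ (A₀).rank := by
  have h : Matrix.diagonal ![(1:ℝ),1,0] =
      A₀ * (!![1,-1,0;0,0,0;0,-(1/2),0] : Mat 3) := by
    ext i j; fin_cases i <;> fin_cases j <;>
      norm_num [Matrix.mul_apply, Fin.sum_univ_three, Matrix.diagonal_apply, Fin.ext_iff, Matrix.vecHead, Matrix.vecTail, Matrix.cons_val_two]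
  have := Matrix.rank_mul_le_left A₀ (!![1,-1,0;0,0,0;0,-(1/2),0] : Mat 3)
  rw [← h, rankD2] at this
  exact this

lemma rankD1 : (Matrix.diagonal ![(1:ℝ),0,0]).rank = 1 := by
  rw [Matrix.rank_diagonal]
  rw [Fintype.card_subtype]
  rw [show (Finset.univ : Finset (Fin 3)) = {0, 1, 2} from rfl]
  rw [Finset.filter_insert, Finset.filter_insert, Finset.filter_singleton]
  norm_num [Matrix.cons_val_two]

lemma A0sq : A₀ * A₀ = !![1,2,-6;0,0,0;0,0,0] := by
  ext i j; fin_cases i <;> fin_cases j <;>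
    norm_num [Matrix.mul_apply, Fin.sum_univ_three, Matrix.vecHead, Matrix.vecTail, Matrix.cons_val_two]

lemma rankA2_le : ((A₀) ^ 2).rank ≤ 1 := by
  have h : (A₀) ^ 2 = (!![1;0;0] : Matrix (Fin 3) (Fin 1) ℝ) *
      (!![1,2,-6] : Matrix (Fin 1) (Fin 3) ℝ) := by
    rw [pow_two, A0sq]
    ext i j; fin_cases i <;> fin_cases j <;>
      norm_num [Matrix.mul_apply, Fin.sum_univ_one, Matrix.vecHead, Matrix.vecTail]
  calc ((A₀) ^ 2).rank ≤ (!![1;0;0] : Matrix (Fin 3) (Fin 1) ℝ).rank := by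
        rw [h]; exact Matrix.rank_mul_le_left _ _
    _ ≤ 1 := by simpa using Matrix.rank_le_card_width (!![1;0;0] : Matrix (Fin 3) (Fin 1) ℝ)

lemma rankA2_ge : 1 ≤ ((A₀) ^ 2).rank := by
  have h : Matrix.diagonal ![(1:ℝ),0,0] =
      (A₀) ^ 2 * (!![1,0,0;0,0,0;0,0,0] : Mat 3) := by
    rw [pow_two, A0sq]
    ext i j; fin_cases i <;> fin_cases j <;>
      norm_num [Matrix.mul_apply, Fin.sum_univ_three, Matrix.diagonal_apply, Fin.ext_iff, Matrix.vecHead, Matrix.vecTail, Matrix.cons_val_two]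
  have := Matrix.rank_mul_le_left ((A₀) ^ 2) (!![1,0,0;0,0,0;0,0,0] : Mat 3)
  rw [← h, rankD1] at this
  exact this

lemma A0cube : (A₀) ^ 3 = (A₀) ^ 2 := by
  rw [pow_succ, pow_two, A0sq]
  ext i j; fin_cases i <;> fin_cases j <;>
    norm_num [Matrix.mul_apply, Fin.sum_univ_three, Matrix.vecHead, Matrix.vecTail, Matrix.cons_val_two]

end aux

theorem stmt2 :
    MatIndex (!![1, 2, -2; 0, 0, -2; 0, 0, 0] : Mat 3) 2 ∧
    ¬ ∃ Xh : DM 3,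
        IsDualCEP 2
          ((!![1, 2, -2; 0, 0, -2; 0, 0, 0] : Mat 3),
           (!![1, 5, -2; 0, 3, -2; 2, 0, 4] : Mat 3)) Xh := by
  constructor
  · refine ⟨by rw [A0cube], ?_⟩
    intro k hk
    interval_cases k
    · rw [pow_one, pow_zero, Matrix.rank_one, Fintype.card_fin]
      have := rankA_le
      omega
    · rw [pow_one, show (1+1 : ℕ) = 2 from rfl]
      have h1 := rankA2_le
      have h2 := rankA_ge
      omega
  · rintro ⟨⟨X, Y⟩, h1, h2, h3⟩
    set A : Mat 3 := !![1, 2, -2; 0, 0, -2; 0, 0, 0] with hA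
    set B : Mat 3 := !![1, 5, -2; 0, 3, -2; 2, 0, 4] with hB
    have h1a : (A * X)ᵀ = A * X := congrArg Prod.fst h1
    have h1b : (A * Y + B * X)ᵀ = A * Y + B * X := congrArg Prod.snd h1
    have h2a : A * (X * X) = X := congrArg Prod.fst h2
    have h2b : A * (X * Y + Y * X) + B * (X * X) = Y := congrArg Prod.snd h2
    have h3a : X * (A * (A * (A * 1))) = A * (A * 1) := congrArg Prod.fst h3
    have h3b : X * (A * (A * (A * 0 + B * 1) + B * (A * 1)) + B * (A * (A * 1)))
        + Y * (A * (A * (A * 1))) = A * (A * 0 + B * 1) + B * (A * 1) :=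
      congrArg Prod.snd h3
    rw [mul_one] at h3a h3b
    rw [mul_zero, zero_add, mul_one] at h3b
    have hAA : A * A = !![1,2,-6;0,0,0;0,0,0] := A0sq
    have hAC2 : A * !![1,2,-6;0,0,0;0,0,0] = !![1,2,-6;0,0,0;0,0,0] := by
      rw [hA]
      ext i j; fin_cases i <;> fin_cases j <;>
        norm_num [hA, hB, Matrix.vecMul, dotProduct, Matrix.mul_apply, Fin.sum_univ_three, Matrix.vecHead, Matrix.vecTail, Matrix.cons_val_two]
    rw [hAA, hAC2] at h3a
    -- column 0 of X
    have e00 : X 0 0 = 1 := by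
      have := congrFun (congrFun h3a 0) 0
      norm_num [hA, hB, Matrix.vecMul, dotProduct, Matrix.mul_apply, Fin.sum_univ_three, Matrix.vecHead, Matrix.vecTail, Matrix.cons_val_two] at this
      linarith
    have e10 : X 1 0 = 0 := by
      have := congrFun (congrFun h3a 1) 0
      norm_num [hA, hB, Matrix.vecMul, dotProduct, Matrix.mul_apply, Fin.sum_univ_three, Matrix.vecHead, Matrix.vecTail, Matrix.cons_val_two] at this
      linarith
    have e20 : X 2 0 = 0 := by
      have := congrFun (congrFun h3a 2) 0
      norm_num [hA, hB, Matrix.vecMul, dotProduct, Matrix.mul_apply, Fin.sum_univ_three, Matrix.vecHead, Matrix.vecTail, Matrix.cons_val_two] at this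
      linarith
    -- row 2 of X is zero, from row 2 of h2a
    have e21 : X 2 1 = 0 := by
      have := congrFun (congrFun h2a 2) 1
      norm_num [hA, hB, Matrix.vecMul, dotProduct, Matrix.mul_apply, Fin.sum_univ_three, Matrix.vecHead, Matrix.vecTail, Matrix.cons_val_two] at this
      linarith
    have e22 : X 2 2 = 0 := by
      have := congrFun (congrFun h2a 2) 2
      norm_num [hA, hB, Matrix.vecMul, dotProduct, Matrix.mul_apply, Fin.sum_univ_three, Matrix.vecHead, Matrix.vecTail, Matrix.cons_val_two] at this
      linarith
    -- row 1 of X is zero, from row 1 of h2a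
    have e11 : X 1 1 = 0 := by
      have := congrFun (congrFun h2a 1) 1
      norm_num [hA, hB, Matrix.vecMul, dotProduct, Matrix.mul_apply, Fin.sum_univ_three, Matrix.vecHead, Matrix.vecTail, Matrix.cons_val_two] at this
      linear_combination (-1 : ℝ) * this - 2 * X 0 1 * e20 - 2 * X 1 1 * e21 - 2 * X 2 1 * e22
    have e12 : X 1 2 = 0 := by
      have := congrFun (congrFun h2a 1) 2
      norm_num [hA, hB, Matrix.vecMul, dotProduct, Matrix.mul_apply, Fin.sum_univ_three, Matrix.vecHead, Matrix.vecTail, Matrix.cons_val_two] at this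
      linear_combination (-1 : ℝ) * this - 2 * X 0 2 * e20 - 2 * X 1 2 * e21 - 2 * X 2 2 * e22
    -- row 0 off-diagonal from symmetry h1a
    have e01 : X 0 1 = 0 := by
      have := congrFun (congrFun h1a 1) 0
      norm_num [hA, hB, Matrix.vecMul, dotProduct, Matrix.mul_apply, Matrix.transpose_apply, Fin.sum_univ_three,
        Matrix.vecHead, Matrix.vecTail, Matrix.cons_val_two] at this
      linarith
    have e02 : X 0 2 = 0 := by
      have := congrFun (congrFun h1a 2) 0
      norm_num [hA, hB, Matrix.vecMul, dotProduct, Matrix.mul_apply, Matrix.transpose_apply, Fin.sum_univ_three,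
        Matrix.vecHead, Matrix.vecTail, Matrix.cons_val_two] at this
      linarith
    have hX : X = !![1,0,0;0,0,0;0,0,0] := by
      ext i j
      fin_cases i <;> fin_cases j <;>
        first
          | exact e00 | exact e01 | exact e02 | exact e10 | exact e11 | exact e12
          | exact e20 | exact e21 | exact e22
    rw [hX] at h2b h1b h3b
    -- now determine Y
    have f20 : Y 2 0 = 2 := by
      have := congrFun (congrFun h2b 2) 0
      norm_num [hA, hB, Matrix.vecMul, dotProduct, Matrix.mul_apply, Matrix.add_apply, Fin.sum_univ_three,
        Matrix.vecHead, Matrix.vecTail, Matrix.cons_val_two] at this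
      linarith
    have f21 : Y 2 1 = 0 := by
      have := congrFun (congrFun h2b 2) 1
      norm_num [hA, hB, Matrix.vecMul, dotProduct, Matrix.mul_apply, Matrix.add_apply, Fin.sum_univ_three,
        Matrix.vecHead, Matrix.vecTail, Matrix.cons_val_two] at this
      linarith
    have f22 : Y 2 2 = 0 := by
      have := congrFun (congrFun h2b 2) 2
      norm_num [hA, hB, Matrix.vecMul, dotProduct, Matrix.mul_apply, Matrix.add_apply, Fin.sum_univ_three,
        Matrix.vecHead, Matrix.vecTail, Matrix.cons_val_two] at this
      linarith
    have f10 : Y 1 0 = -4 := by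
      have := congrFun (congrFun h2b 1) 0
      norm_num [hA, hB, Matrix.vecMul, dotProduct, Matrix.mul_apply, Matrix.add_apply, Fin.sum_univ_three,
        Matrix.vecHead, Matrix.vecTail, Matrix.cons_val_two] at this
      linarith
    have f11 : Y 1 1 = 0 := by
      have := congrFun (congrFun h2b 1) 1
      norm_num [hA, hB, Matrix.vecMul, dotProduct, Matrix.mul_apply, Matrix.add_apply, Fin.sum_univ_three,
        Matrix.vecHead, Matrix.vecTail, Matrix.cons_val_two] at this
      linarith
    have f12 : Y 1 2 = 0 := by
      have := congrFun (congrFun h2b 1) 2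
      norm_num [hA, hB, Matrix.vecMul, dotProduct, Matrix.mul_apply, Matrix.add_apply, Fin.sum_univ_three,
        Matrix.vecHead, Matrix.vecTail, Matrix.cons_val_two] at this
      linarith
    have f00 : Y 0 0 = 11 := by
      have := congrFun (congrFun h2b 0) 0
      norm_num [hA, hB, Matrix.vecMul, dotProduct, Matrix.mul_apply, Matrix.add_apply, Fin.sum_univ_three,
        Matrix.vecHead, Matrix.vecTail, Matrix.cons_val_two] at this
      linarith
    have f01 : Y 0 1 = -4 := by
      have := congrFun (congrFun h1b 1) 0
      norm_num [hA, hB, Matrix.vecMul, dotProduct, Matrix.mul_apply, Matrix.add_apply, Matrix.transpose_apply,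
        Fin.sum_univ_three, Matrix.vecHead, Matrix.vecTail, Matrix.cons_val_two] at this
      linarith
    have f02 : Y 0 2 = 2 := by
      have := congrFun (congrFun h1b 2) 0
      norm_num [hA, hB, Matrix.vecMul, dotProduct, Matrix.mul_apply, Matrix.add_apply, Matrix.transpose_apply,
        Fin.sum_univ_three, Matrix.vecHead, Matrix.vecTail, Matrix.cons_val_two] at this
      linarith
    have hY : Y = !![11,-4,2;-4,0,0;2,0,0] := by
      ext i j
      fin_cases i <;> fin_cases j <;>
        first
          | exact f00 | exact f01 | exact f02 | exact f10 | exact f11 | exact f12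
          | exact f20 | exact f21 | exact f22
    rw [hY] at h3b
    have := congrFun (congrFun h3b 0) 1
    norm_num [hA, hB, Matrix.vecMul, dotProduct, Matrix.mul_apply, Matrix.add_apply, Fin.sum_univ_three,
      Matrix.vecHead, Matrix.vecTail, Matrix.cons_val_two] at this
end

section
/- Let Â = A + εB be a dual real n×n matrix with index of A equal to m, and let S = Σ_{i=1}^m A^{m-i} B A^{i-1}. If the dual core-EP inverse of Â exists, then (I − A^m (A^m)^⊕) S (I − (A^m)^⊕ A^m) = O, where (A^m)^⊕ denotes the core-EP inverse of A^m (which, since A^m has index ≤ 1, coincides with the core inverse). -/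
open Matrix

/-- If the column space of `Q` is contained in that of `P`, then `Q = P * C` for some `C`. -/
lemma exists_factor {n : ℕ} (P Q : Mat n)
    (h : LinearMap.range Q.mulVecLin ≤ LinearMap.range P.mulVecLin) :
    ∃ C : Mat n, P * C = Q := by
  have hc : ∀ j : Fin n, ∃ c : Fin n → ℝ, P.mulVec c = Q.mulVec (Pi.single j 1) := by
    intro j
    have : Q.mulVec (Pi.single j 1) ∈ LinearMap.range P.mulVecLin :=
      h ⟨Pi.single j 1, rfl⟩
    exact this
  choose c hcv using hc
  refine ⟨Matrix.of fun i j => c j i, ?_⟩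
  ext i j
  have h1 := congrFun (hcv j) i
  have h2 : P.mulVec (c j) i = ∑ k, P i k * c j k := rfl
  have h3 : Q.mulVec (Pi.single j 1) i = Q i j := by
    simp [Matrix.mulVec, dotProduct, Pi.single_apply, Finset.sum_ite_eq']
  rw [h2, h3] at h1
  simpa [Matrix.mul_apply] using h1

/-- Closed form of dual powers. -/
lemma dpow_eq {n : ℕ} (A B : Mat n) :
    ∀ k, dpow (A, B) k = (A ^ k, ∑ i ∈ Finset.range k, A ^ (k - 1 - i) * B * A ^ i)
  | 0 => by simp [dpow]
  | k+1 => by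
    rw [dpow, dpow_eq A B k, dmul]
    refine Prod.ext ?_ ?_
    · show A * A ^ k = A ^ (k + 1)
      rw [pow_succ']
    · show A * (∑ i ∈ Finset.range k, A ^ (k - 1 - i) * B * A ^ i) + B * A ^ k
        = ∑ i ∈ Finset.range (k + 1), A ^ (k + 1 - 1 - i) * B * A ^ i
      rw [Finset.mul_sum, Finset.sum_range_succ]
      congr 1
      · refine Finset.sum_congr rfl fun i hi => ?_
        have hik : i < k := Finset.mem_range.mp hi
        have h1 : k - 1 - i + 1 = k + 1 - 1 - i := by omega
        rw [← mul_assoc, ← mul_assoc, ← pow_succ', h1]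
      · have : k + 1 - 1 - k = 0 := by omega
        rw [this, pow_zero, one_mul]

lemma pow_factor {n : ℕ} (A X : Mat n) (h : A * (X * X) = X) :
    ∀ k, X = A ^ k * X ^ (k + 1)
  | 0 => by simp
  | k+1 => by
    have ih := pow_factor A X h k
    have hx : X ^ (k + 1) = A * X ^ (k + 2) := by
      calc X ^ (k + 1) = X * X ^ k := by rw [pow_succ']
        _ = (A * (X * X)) * X ^ k := by rw [h]
        _ = A * ((X * X) * X ^ k) := by rw [mul_assoc]
        _ = A * X ^ (k + 2) := by
            rw [mul_assoc, ← pow_succ', ← pow_succ']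
    calc X = A ^ k * X ^ (k + 1) := ih
      _ = A ^ k * (A * X ^ (k + 2)) := by rw [hx]
      _ = A ^ (k + 1) * X ^ (k + 2) := by rw [← mul_assoc, ← pow_succ]

theorem stmt3 {n m : ℕ} (A B : Mat n) (hm : MatIndex A m)
    (S : Mat n) (hS : S = ∑ i ∈ Finset.range m, A ^ (m - 1 - i) * B * A ^ i)
    (G : Mat n) (hG : IsCEP 1 (A ^ m) G)
    (hex : ∃ Xh : DM n, IsDualCEP m (A, B) Xh) :
    (1 - A ^ m * G) * S * (1 - G * A ^ m) = 0 := by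
  obtain ⟨⟨X, Y⟩, _hsym, h2, h3⟩ := hex
  -- real part of condition 2 : A * (X * X) = X
  have h2r : A * (X * X) = X := congrArg Prod.fst h2
  -- dual part of condition 3
  rw [dpow_eq, dpow_eq] at h3
  have h3d : X * (∑ i ∈ Finset.range (m+1), A ^ (m + 1 - 1 - i) * B * A ^ i)
      + Y * A ^ (m + 1) = ∑ i ∈ Finset.range m, A ^ (m - 1 - i) * B * A ^ i :=
    congrArg Prod.snd h3
  -- get C with A^(m+1) * C = A^m from the rank hypothesis
  have hle : LinearMap.range (A ^ (m+1)).mulVecLin ≤ LinearMap.range (A ^ m).mulVecLin := by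
    rw [pow_succ, Matrix.mulVecLin_mul]
    exact LinearMap.range_comp_le_range _ _
  have heq : LinearMap.range (A ^ (m+1)).mulVecLin = LinearMap.range (A ^ m).mulVecLin := by
    apply Submodule.eq_of_le_of_finrank_le hle
    exact le_of_eq hm.1.symm
  obtain ⟨C, hC⟩ := exists_factor (A ^ (m+1)) (A ^ m) (le_of_eq heq.symm)
  -- A^m = A^(m+k) * C^k
  have hfac : ∀ k, A ^ m = A ^ (m + k) * C ^ k := by
    intro k
    induction k with
    | zero => simp
    | succ k ih =>
      have h1 : A ^ (m + k) = A ^ (m + k + 1) * C := by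
        calc A ^ (m + k) = A ^ k * A ^ m := by rw [← pow_add, add_comm]
          _ = A ^ k * (A ^ (m+1) * C) := by rw [hC]
          _ = A ^ (m + k + 1) * C := by
              rw [← mul_assoc, ← pow_add]; ring_nf
      calc A ^ m = A ^ (m + k) * C ^ k := ih
        _ = A ^ (m + k + 1) * C * C ^ k := by rw [h1]
        _ = A ^ (m + (k + 1)) * C ^ (k + 1) := by
            rw [mul_assoc, ← pow_succ']; ring_nf
  -- A^m = A^m * A^m * C^m
  have hMM : A ^ m = A ^ m * A ^ m * C ^ m := by
    have := hfac m
    rwa [pow_add] at this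
  -- G * (A^m * A^m) = A^m
  have hG2 : G * (A ^ m * A ^ m) = A ^ m := by
    have := hG.2.2
    rwa [pow_one, sq] at this
  -- A^m * G * A^m = A^m
  have hMGM : A ^ m * G * A ^ m = A ^ m := by
    calc A ^ m * G * A ^ m = A ^ m * G * (A ^ m * A ^ m * C ^ m) := by rw [← hMM]
      _ = A ^ m * (G * (A ^ m * A ^ m)) * C ^ m := by simp only [mul_assoc]
      _ = A ^ m * A ^ m * C ^ m := by rw [hG2]
      _ = A ^ m := hMM.symm
  -- (1 - A^m G) * X = 0
  have hXfac : X = A ^ m * X ^ (m + 1) := pow_factor A X h2r m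
  have hP : (1 - A ^ m * G) * A ^ m = 0 := by
    rw [sub_mul, one_mul, hMGM, sub_self]
  have hXleft : (1 - A ^ m * G) * X = 0 := by
    rw [hXfac, ← mul_assoc, hP, zero_mul]
  -- A^(m+1) * (1 - G * A^m) = 0
  have hQ : A ^ m * (1 - G * A ^ m) = 0 := by
    rw [mul_sub, mul_one, ← mul_assoc, hMGM, sub_self]
  have hAright : A ^ (m + 1) * (1 - G * A ^ m) = 0 := by
    rw [pow_succ', mul_assoc, hQ, mul_zero]
  -- conclude
  rw [hS, ← h3d]
  have expand : (1 - A ^ m * G) *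
      (X * (∑ i ∈ Finset.range (m+1), A ^ (m + 1 - 1 - i) * B * A ^ i)
        + Y * A ^ (m + 1)) * (1 - G * A ^ m)
      = ((1 - A ^ m * G) * X) *
          ((∑ i ∈ Finset.range (m+1), A ^ (m + 1 - 1 - i) * B * A ^ i) * (1 - G * A ^ m))
        + ((1 - A ^ m * G) * Y) * (A ^ (m + 1) * (1 - G * A ^ m)) := by
    noncomm_ring
  rw [expand, hXleft, hAright, zero_mul, mul_zero, add_zero]
end

section
/- Let A be a real n×n matrix with index m. Then the core-EP inverse of A satisfies A^⊕ = A^D A^m (A^m)^†, where A^D is the Drazin inverse and (A^m)^† is the Moore–Penrose inverse of A^m. -/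
open Matrix

/-- `X` is the Drazin inverse of `A` (with `m` the index of `A`). -/
def IsDrazin {n : ℕ} (m : ℕ) (A X : Mat n) : Prop :=
  X * A ^ (m+1) = A ^ m ∧ X * A * X = X ∧ A * X = X * A

/-- `X` is the Moore-Penrose inverse of `M`. -/
def IsMP {n : ℕ} (M X : Mat n) : Prop :=
  M * X * M = M ∧ X * M * X = X ∧ (M * X)ᵀ = M * X ∧ (X * M)ᵀ = X * M

theorem stmt7 {n m : ℕ} (A D P C : Mat n) (hm : MatIndex A m)
    (hD : IsDrazin m A D) (hP : IsMP (A ^ m) P) (hC : IsCEP m A C) :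
    C = D * A ^ m * P := by
  obtain ⟨hD1, hD2, hD3⟩ := hD
  obtain ⟨hP1, hP2, hP3, hP4⟩ := hP
  obtain ⟨hC1, hC2, hC3⟩ := hC
  set X : Mat n := D * A ^ m * P with hXdef
  -- D commutes with powers of A
  have hcomm : ∀ k : ℕ, D * A ^ k = A ^ k * D := by
    intro k
    induction k with
    | zero => simp
    | succ k ih => rw [pow_succ, ← mul_assoc, ih, mul_assoc, ← hD3, ← mul_assoc]
  -- A * X = A^m * P
  have hAX : A * X = A ^ m * P := by
    rw [hXdef, ← mul_assoc, ← mul_assoc, hD3, mul_assoc, ← mul_assoc, mul_assoc D A,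
      ← pow_succ', hD1]
  -- X satisfies the three core-EP equations
  have e1 : (A * X)ᵀ = A * X := by rw [hAX]; exact hP3
  have e2 : A * (X * X) = X := by
    rw [← mul_assoc, hAX, hXdef]
    calc A ^ m * P * (D * A ^ m * P)
        = A ^ m * P * (A ^ m * D * P) := by rw [hcomm]
      _ = A ^ m * P * A ^ m * (D * P) := by simp only [mul_assoc]
      _ = A ^ m * (D * P) := by rw [hP1]
      _ = D * A ^ m * P := by rw [← mul_assoc, ← hcomm]
  have e3 : X * A ^ (m+1) = A ^ m := by
    rw [hXdef, pow_succ]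
    calc D * A ^ m * P * (A ^ m * A)
        = D * (A ^ m * P * A ^ m) * A := by simp only [mul_assoc]
      _ = D * A ^ m * A := by rw [hP1]
      _ = A ^ m := by rw [mul_assoc, ← pow_succ, hD1]
  -- X * A * X = X
  have hXAX : X * A * X = X := by
    rw [mul_assoc, hAX, hXdef]
    calc D * A ^ m * P * (A ^ m * P)
        = D * A ^ m * (P * A ^ m * P) := by simp only [mul_assoc]
      _ = D * A ^ m * P := by rw [hP2]
  -- powers: A^k * C^(k+1) = C, and same for X
  have hpow : ∀ (Y : Mat n), A * (Y * Y) = Y → ∀ k : ℕ, A ^ k * Y ^ (k+1) = Y := by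
    intro Y hY k
    induction k with
    | zero => simp
    | succ k ih =>
      have : A ^ (k+1) * Y ^ (k+2) = A ^ k * (A * (Y * Y)) * Y ^ k := by
        rw [pow_succ, show Y ^ (k+2) = Y * Y * Y ^ k by
          rw [show k+2 = 2+k from by omega, pow_add, pow_two]]
        simp only [mul_assoc]
      rw [this, hY, mul_assoc, ← pow_succ', ih]
  have hpC := hpow C hC2
  have hpX := hpow X e2
  -- A^{k+1} * Y^{k+1} = A * Y
  have hACm : A ^ (m+1) * C ^ (m+1) = A * C := by
    rw [pow_succ', mul_assoc, hpC m]
  have hAXm : A ^ (m+1) * X ^ (m+1) = A * X := by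
    rw [pow_succ', mul_assoc, hpX m]
  -- (A X)(A C) = A C  and (A C)(A X) = A X
  have h1 : (A * X) * (A * C) = A * C := by
    calc (A * X) * (A * C) = A * (X * A ^ (m+1)) * C ^ (m+1) := by
          rw [← hACm]; simp only [mul_assoc]
      _ = A * C := by rw [e3, ← pow_succ', hACm]
  have h2 : (A * C) * (A * X) = A * X := by
    calc (A * C) * (A * X) = A * (C * A ^ (m+1)) * X ^ (m+1) := by
          rw [← hAXm]; simp only [mul_assoc]
      _ = A * X := by rw [hC3, ← pow_succ', hAXm]
  -- transpose of h1 gives AC = AX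
  have hACX : A * C = A * X := by
    have := congrArg Matrix.transpose h1
    rw [transpose_mul, hC1, e1, h2] at this
    rw [← hC1, ← this, e1]
  -- finish: C = A^m C^{m+1} = X A^{m+1} C^{m+1} = X (A C) = X (A X) = X A X = X
  calc C = A ^ m * C ^ (m+1) := (hpC m).symm
    _ = X * A ^ (m+1) * C ^ (m+1) := by rw [e3]
    _ = X * (A * C) := by rw [mul_assoc, hACm]
    _ = X * (A * X) := by rw [hACX]
    _ = X := by rw [← mul_assoc, hXAX]
end

section
/- Let Â = A + εB be a dual real n×n matrix, with index of A equal to m. If both the dual Drazin inverse Â^D and the dual core-EP inverse Â^⊕ exist, then the dual Moore–Penrose inverse (Â^m)^† of Â^m exists and Â^⊕ = Â^D · Â^m · (Â^m)^†. -/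
open Matrix

/-- `Xh` is a dual Drazin inverse of the dual matrix `Ah`. -/
def IsDualDrazin {n : ℕ} (m : ℕ) (Ah Xh : DM n) : Prop :=
  dmul Xh (dpow Ah (m+1)) = dpow Ah m ∧ dmul (dmul Xh Ah) Xh = Xh ∧
    dmul Ah Xh = dmul Xh Ah

/-- `Xh` is a dual Moore-Penrose inverse of the dual matrix `Mh`. -/
def IsDualMP {n : ℕ} (Mh Xh : DM n) : Prop :=
  dmul (dmul Mh Xh) Mh = Mh ∧ dmul (dmul Xh Mh) Xh = Xh ∧
    dT (dmul Mh Xh) = dmul Mh Xh ∧ dT (dmul Xh Mh) = dmul Xh Mh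

/-! ### Auxiliary material -/

/-- Type synonym carrying the dual-matrix monoid structure. -/
def DMr (n : ℕ) := DM n

namespace DMr

variable {n : ℕ}

instance : One (DMr n) := ⟨((1 : Mat n), (0 : Mat n))⟩
instance : Mul (DMr n) := ⟨fun X Y => dmul X Y⟩

instance : Monoid (DMr n) where
  mul_assoc a b c := by
    show dmul (dmul a b) c = dmul a (dmul b c)
    unfold dmul
    refine Prod.ext ?_ ?_ <;> simp <;> noncomm_ring
  one_mul a := by
    show dmul ((1 : Mat n), (0 : Mat n)) a = a
    unfold dmul; simp; rfl
  mul_one a := by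
    show dmul a ((1 : Mat n), (0 : Mat n)) = a
    unfold dmul; simp; rfl

lemma dT_dmul (X Y : DM n) : dT (dmul X Y) = dmul (dT Y) (dT X) := by
  unfold dmul dT
  refine Prod.ext ?_ ?_ <;> simp [transpose_mul, add_comm]

lemma dpow_eq_pow (X : DMr n) (k : ℕ) : dpow X k = X ^ k := by
  induction k with
  | zero => rfl
  | succ k ih => rw [pow_succ']; show dmul X (dpow X k) = X * X ^ k; rw [ih]; rfl

end DMr

lemma dpow_fst_s8 {n : ℕ} (X : DM n) (k : ℕ) : (dpow X k).1 = X.1 ^ k := by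
  induction k with
  | zero => simp [dpow]
  | succ k ih =>
    rw [pow_succ']
    show (dmul X (dpow X k)).1 = _
    rw [show (dmul X (dpow X k)).1 = X.1 * (dpow X k).1 from rfl, ih]

section AbstractCEP

variable {R : Type*} [Monoid R] (t : R → R)

theorem cep_pow (a x : R) (h : a * (x * x) = x) : ∀ k : ℕ, a ^ k * x ^ (k + 1) = x
  | 0 => by simp
  | (k+1) => by
    have h1 : a * x ^ (k + 2) = x ^ (k + 1) := by
      have hx : x ^ (k + 2) = x * (x * x ^ k) := by rw [pow_succ', pow_succ']
      rw [hx, ← mul_assoc x x, ← mul_assoc a, h, ← pow_succ']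
    calc a ^ (k+1) * x ^ (k+2) = a ^ k * (a * x ^ (k+2)) := by rw [pow_succ, mul_assoc]
      _ = a ^ k * x ^ (k+1) := by rw [h1]
      _ = x := cep_pow a x h k

theorem cep_ax (a x : R) (m : ℕ) (h : a * (x * x) = x) :
    a * x = a ^ (m+1) * x ^ (m+1) := by
  conv_lhs => rw [← cep_pow a x h m]
  rw [← mul_assoc, ← pow_succ']

theorem cep_unique_s8 (ht : ∀ x y : R, t (x * y) = t y * t x) (m : ℕ) (a x y : R)
    (hx1 : t (a * x) = a * x) (hx2 : a * (x * x) = x) (hx3 : x * a ^ (m+1) = a ^ m)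
    (hy1 : t (a * y) = a * y) (hy2 : a * (y * y) = y) (hy3 : y * a ^ (m+1) = a ^ m) :
    x = y := by
  have hax : a * x = a ^ (m+1) * x ^ (m+1) := cep_ax a x m hx2
  have hay : a * y = a ^ (m+1) * y ^ (m+1) := cep_ax a y m hy2
  have hAy : (a * y) * a ^ (m+1) = a ^ (m+1) := by
    rw [mul_assoc, hy3, ← pow_succ']
  have hAx : (a * x) * a ^ (m+1) = a ^ (m+1) := by
    rw [mul_assoc, hx3, ← pow_succ']
  have h1 : a * x = (a * y) * (a * x) := by
    calc a * x = a ^ (m+1) * x ^ (m+1) := hax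
      _ = ((a * y) * a ^ (m+1)) * x ^ (m+1) := by rw [hAy]
      _ = (a * y) * (a ^ (m+1) * x ^ (m+1)) := by rw [mul_assoc]
      _ = (a * y) * (a * x) := by rw [← hax]
  have h2 : a * y = (a * x) * (a * y) := by
    calc a * y = a ^ (m+1) * y ^ (m+1) := hay
      _ = ((a * x) * a ^ (m+1)) * y ^ (m+1) := by rw [hAx]
      _ = (a * x) * (a ^ (m+1) * y ^ (m+1)) := by rw [mul_assoc]
      _ = (a * x) * (a * y) := by rw [← hay]
  have h3 : a * x = a * y := by
    calc a * x = t (a * x) := hx1.symm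
      _ = t ((a * y) * (a * x)) := by rw [← h1]
      _ = t (a * x) * t (a * y) := ht _ _
      _ = (a * x) * (a * y) := by rw [hx1, hy1]
      _ = a * y := h2.symm
  have h4 : x = y * (a * x) := by
    calc x = a ^ m * x ^ (m+1) := (cep_pow a x hx2 m).symm
      _ = (y * a ^ (m+1)) * x ^ (m+1) := by rw [hy3]
      _ = y * (a ^ (m+1) * x ^ (m+1)) := by rw [mul_assoc]
      _ = y * (a * x) := by rw [← hax]
  have h5 : y = x * (a * y) := by
    calc y = a ^ m * y ^ (m+1) := (cep_pow a y hy2 m).symm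
      _ = (x * a ^ (m+1)) * y ^ (m+1) := by rw [hx3]
      _ = x * (a ^ (m+1) * y ^ (m+1)) := by rw [mul_assoc]
      _ = x * (a * y) := by rw [← hay]
  calc x = y * (a * x) := h4
    _ = (x * (a * y)) * (a * x) := by rw [← h5]
    _ = x * ((a * y) * (a * x)) := by rw [mul_assoc]
    _ = x * (a * x) := by rw [← h1]
    _ = x * (a * y) := by rw [h3]
    _ = y := h5.symm

theorem cep_construct (m : ℕ) (a d p : R)
    (hd1 : d * a ^ (m+1) = a ^ m) (hd3 : a * d = d * a)
    (hp1 : (a ^ m * p) * a ^ m = a ^ m) (hp3 : t (a ^ m * p) = a ^ m * p) :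
    (t (a * (d * (a ^ m * p))) = a * (d * (a ^ m * p))) ∧
      (a * ((d * (a ^ m * p)) * (d * (a ^ m * p))) = d * (a ^ m * p)) ∧
        ((d * (a ^ m * p)) * a ^ (m+1) = a ^ m) := by
  have hcm : d * a ^ m = a ^ m * d := (Commute.pow_right (show Commute d a from hd3.symm) m)
  have hady : a * (d * (a ^ m * p)) = a ^ m * p := by
    calc a * (d * (a ^ m * p)) = ((a * d) * a ^ m) * p := by rw [← mul_assoc, ← mul_assoc]
      _ = (d * (a * a ^ m)) * p := by rw [hd3, mul_assoc d a]
      _ = (a ^ m) * p := by rw [← pow_succ', hd1]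
  have hy' : d * (a ^ m * p) = a ^ m * (d * p) := by
    rw [← mul_assoc, hcm, mul_assoc]
  refine ⟨by rw [hady]; exact hp3, ?_, ?_⟩
  · calc a * ((d * (a ^ m * p)) * (d * (a ^ m * p)))
        = (a * (d * (a ^ m * p))) * (d * (a ^ m * p)) := by rw [← mul_assoc]
      _ = (a ^ m * p) * (a ^ m * (d * p)) := by rw [hady, hy']
      _ = ((a ^ m * p) * a ^ m) * (d * p) := by rw [← mul_assoc]
      _ = a ^ m * (d * p) := by rw [hp1]
      _ = d * (a ^ m * p) := hy'.symm
  · calc (d * (a ^ m * p)) * a ^ (m+1) = d * ((a ^ m * p) * (a ^ m * a)) := by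
          rw [mul_assoc, pow_succ]
      _ = d * (((a ^ m * p) * a ^ m) * a) := by rw [← mul_assoc ((a:R) ^ m * p)]
      _ = d * (a ^ m * a) := by rw [hp1]
      _ = a ^ m := by rw [← pow_succ, hd1]

end AbstractCEP

theorem dual_cep_unique {n : ℕ} (m : ℕ) (a x y : DM n)
    (hx1 : dT (dmul a x) = dmul a x) (hx2 : dmul a (dmul x x) = x)
    (hx3 : dmul x (dpow a (m+1)) = dpow a m)
    (hy1 : dT (dmul a y) = dmul a y) (hy2 : dmul a (dmul y y) = y)
    (hy3 : dmul y (dpow a (m+1)) = dpow a m) : x = y := by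
  refine cep_unique_s8 (R := DMr n) dT (fun u v => DMr.dT_dmul u v) m a x y
    hx1 hx2 ?_ hy1 hy2 ?_
  · rw [← DMr.dpow_eq_pow a (m+1), ← DMr.dpow_eq_pow a m]; exact hx3
  · rw [← DMr.dpow_eq_pow a (m+1), ← DMr.dpow_eq_pow a m]; exact hy3

theorem dual_cep_construct {n : ℕ} (m : ℕ) (a d p : DM n)
    (hd1 : dmul d (dpow a (m+1)) = dpow a m) (hd3 : dmul a d = dmul d a)
    (hp1 : dmul (dmul (dpow a m) p) (dpow a m) = dpow a m)
    (hp3 : dT (dmul (dpow a m) p) = dmul (dpow a m) p) :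
    dT (dmul a (dmul d (dmul (dpow a m) p))) = dmul a (dmul d (dmul (dpow a m) p)) ∧
      dmul a (dmul (dmul d (dmul (dpow a m) p)) (dmul d (dmul (dpow a m) p)))
        = dmul d (dmul (dpow a m) p) ∧
      dmul (dmul d (dmul (dpow a m) p)) (dpow a (m+1)) = dpow a m := by
  have h := cep_construct (R := DMr n) dT m a d p ?_ hd3 ?_ ?_
  · refine ⟨?_, ?_, ?_⟩
    · rw [DMr.dpow_eq_pow a m]; exact h.1
    · rw [DMr.dpow_eq_pow a m]; exact h.2.1
    · rw [DMr.dpow_eq_pow a m, DMr.dpow_eq_pow a (m+1)]; exact h.2.2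
  · rw [← DMr.dpow_eq_pow a (m+1), ← DMr.dpow_eq_pow a m]; exact hd1
  · rw [← DMr.dpow_eq_pow a m]; exact hp1
  · rw [← DMr.dpow_eq_pow a m]; exact hp3

lemma tmul_self_eq_zero {n : ℕ} {C : Mat n} (h : Cᵀ * C = 0) : C = 0 := by
  have h2 : Cᴴ * C = 0 := by rw [conjTranspose_eq_transpose_of_trivial]; exact h
  exact conjTranspose_mul_self_eq_zero.mp h2

lemma exists_MP {n : ℕ} (M : Mat n) :
    ∃ G : Mat n, M * G * M = M ∧ G * M * G = G ∧ (M * G)ᵀ = M * G ∧ (G * M)ᵀ = G * M := by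
  classical
  have hS : (Mᵀ * M).IsHermitian := by
    rw [Matrix.IsHermitian, conjTranspose_eq_transpose_of_trivial, transpose_mul,
      transpose_transpose]
  set S : Mat n := Mᵀ * M with hSdef
  set U : Mat n := (Matrix.IsHermitian.eigenvectorUnitary hS : Mat n) with hU
  set e : Fin n → ℝ := hS.eigenvalues with he
  have hU1 : U * Uᵀ = 1 := by
    have := mem_unitaryGroup_iff.mp (Matrix.IsHermitian.eigenvectorUnitary hS).2
    rwa [star_eq_conjTranspose, conjTranspose_eq_transpose_of_trivial] at this
  have hU2 : Uᵀ * U = 1 := by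
    have := mem_unitaryGroup_iff'.mp (Matrix.IsHermitian.eigenvectorUnitary hS).2
    rwa [star_eq_conjTranspose, conjTranspose_eq_transpose_of_trivial] at this
  have hspec : S = U * diagonal e * Uᵀ := by
    have h := hS.spectral_theorem
    rwa [Unitary.conjStarAlgAut_apply, star_eq_conjTranspose,
      conjTranspose_eq_transpose_of_trivial, RCLike.ofReal_real_eq_id, Function.id_comp] at h
  set Sp : Mat n := U * diagonal (fun i => (e i)⁻¹) * Uᵀ with hSp
  have key : ∀ f g : Fin n → ℝ, (U * diagonal f * Uᵀ) * (U * diagonal g * Uᵀ)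
      = U * diagonal (fun i => f i * g i) * Uᵀ := by
    intro f g
    calc (U * diagonal f * Uᵀ) * (U * diagonal g * Uᵀ)
        = U * diagonal f * (Uᵀ * U) * diagonal g * Uᵀ := by
          simp only [Matrix.mul_assoc]
      _ = U * (diagonal f * diagonal g) * Uᵀ := by
          rw [hU2]; simp only [Matrix.mul_assoc, Matrix.one_mul]
      _ = U * diagonal (fun i => f i * g i) * Uᵀ := by rw [diagonal_mul_diagonal]
  have hSSpS : S * (Sp * S) = S := by
    rw [← Matrix.mul_assoc, hspec, hSp, key, key]
    have : (fun i => e i * (e i)⁻¹ * e i) = e := by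
      funext i
      rcases eq_or_ne (e i) 0 with h | h
      · simp [h]
      · field_simp
    rw [this]
  have hSpSSp : Sp * (S * Sp) = Sp := by
    rw [← Matrix.mul_assoc, hspec, hSp, key, key]
    have : (fun i => (e i)⁻¹ * e i * (e i)⁻¹) = fun i => (e i)⁻¹ := by
      funext i
      rcases eq_or_ne (e i) 0 with h | h
      · simp [h]
      · field_simp
    rw [this]
  have hcomm : S * Sp = Sp * S := by
    rw [hspec, hSp, key, key]
    have : (fun i => e i * (e i)⁻¹) = (fun i => (e i)⁻¹ * e i) := funext fun i => mul_comm _ _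
    rw [this]
  have hSpt : Spᵀ = Sp := by
    rw [hSp, transpose_mul, transpose_mul, transpose_transpose, diagonal_transpose,
      Matrix.mul_assoc]
  have hSt : Sᵀ = S := by rw [hSdef, transpose_mul, transpose_transpose]
  have hJt : (Sp * S)ᵀ = Sp * S := by rw [transpose_mul, hSt, hSpt, hcomm]
  have hMJ : M * (Sp * S) = M := by
    have hC : (M * (Sp * S) - M)ᵀ * (M * (Sp * S) - M) = 0 := by
      have expand : (M * (Sp * S) - M)ᵀ * (M * (Sp * S) - M)
          = (Sp * S) * ((Mᵀ * M) * (Sp * S)) - (Sp * S) * (Mᵀ * M)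
            - (Mᵀ * M) * (Sp * S) + Mᵀ * M := by
        rw [transpose_sub, transpose_mul, hJt]
        noncomm_ring
      rw [expand, ← hSdef]
      have h1 : S * (Sp * S) = S := hSSpS
      rw [h1]
      abel
    have := tmul_self_eq_zero hC
    rwa [sub_eq_zero] at this
  clear_value S Sp
  refine ⟨Sp * Mᵀ, ?_, ?_, ?_, ?_⟩
  · calc M * (Sp * Mᵀ) * M = M * (Sp * S) := by rw [hSdef]; noncomm_ring
      _ = M := hMJ
  · calc (Sp * Mᵀ) * M * (Sp * Mᵀ) = (Sp * (S * Sp)) * Mᵀ := by rw [hSdef]; noncomm_ring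
      _ = Sp * Mᵀ := by rw [hSpSSp]
  · rw [transpose_mul, transpose_mul, transpose_transpose, hSpt, Matrix.mul_assoc]
  · calc ((Sp * Mᵀ) * M)ᵀ = (Sp * S)ᵀ := by rw [hSdef, Matrix.mul_assoc]
      _ = Sp * S := hJt
      _ = (Sp * Mᵀ) * M := by rw [hSdef, Matrix.mul_assoc]

lemma dualMP_core {n : ℕ} (M N G : Mat n)
    (h1 : M * G * M = M) (h2 : G * M * G = G)
    (h3 : (M * G)ᵀ = M * G) (h4 : (G * M)ᵀ = G * M)
    (hN : (1 - M * G) * N * (1 - G * M) = 0) :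
    ∃ E : Mat n,
      (M * G * N + (M * E + N * G) * M = N) ∧
      (G * M * E + (G * N + E * M) * G = E) ∧
      ((M * E + N * G)ᵀ = M * E + N * G) ∧
      ((G * N + E * M)ᵀ = G * N + E * M) := by
  have hGt : Gᵀ * Mᵀ = M * G := (transpose_mul M G).symm.trans h3
  have hMt : Mᵀ * Gᵀ = G * M := (transpose_mul G M).symm.trans h4
  have hGP : G * (M * G) = G := by rw [← Matrix.mul_assoc, h2]
  have hQG : (G * M) * G = G := h2
  have hPGt : (M * G) * Gᵀ = Gᵀ := by
    have := congrArg Matrix.transpose hGP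
    rwa [transpose_mul, h3] at this
  have hQGt : Gᵀ * (G * M) = Gᵀ := by
    have := congrArg Matrix.transpose hQG
    rwa [transpose_mul, h4] at this
  have z1 : (1 - M * G) * M = 0 := by rw [sub_mul, one_mul, h1, sub_self]
  have z2 : M * (1 - G * M) = 0 := by
    rw [mul_sub, mul_one, ← Matrix.mul_assoc, h1, sub_self]
  have hQQ : (G * M) * (G * M) = G * M := by
    rw [← Matrix.mul_assoc, h2]
  have z4 : (1 - M * G) * (M * G) = 0 := by
    rw [sub_mul, one_mul, ← Matrix.mul_assoc, h1, sub_self]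
  have hNfin : M * G * N + N * (G * M) - M * G * (N * (G * M)) = N := by
    have hexp : M * G * N + N * (G * M) - M * G * (N * (G * M)) - N
        = -((1 - M * G) * N * (1 - G * M)) := by noncomm_ring
    rw [hN, neg_zero] at hexp
    exact sub_eq_zero.mp hexp
  set E : Mat n := -(G * N * G) + G * Gᵀ * Nᵀ * (1 - M * G) + (1 - G * M) * (Nᵀ * (Gᵀ * G))
    with hE
  refine ⟨E, ?_, ?_, ?_, ?_⟩
  · have stepA : M * G * N + (M * E + N * G) * M
        = M * G * N + N * (G * M) - M * G * (N * (G * M))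
          + (M * (G * (Gᵀ * Nᵀ))) * ((1 - M * G) * M)
          + (M * (1 - G * M)) * (Nᵀ * (Gᵀ * (G * M))) := by
      rw [hE]; noncomm_ring
    rw [stepA, z1, z2, mul_zero, zero_mul, add_zero, add_zero, hNfin]
  · have stepA : G * M * E + (G * N + E * M) * G
        = -(((G * M) * G) * (N * G)) + ((G * M) * G) * (Gᵀ * (Nᵀ * (1 - M * G)))
          + ((G * M) - (G * M) * (G * M)) * (Nᵀ * (Gᵀ * G))
          + G * N * G + -(G * N * (G * (M * G)))
          + (G * (Gᵀ * Nᵀ)) * ((1 - M * G) * (M * G))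
          + (1 - G * M) * (Nᵀ * (Gᵀ * (G * (M * G)))) := by
      rw [hE]; noncomm_ring
    rw [stepA, hQG, hQQ, sub_self, zero_mul, hGP, z4, mul_zero, hE]
    noncomm_ring
  · have stepA : M * E + N * G
        = M * (G * (Gᵀ * (Nᵀ * (1 - M * G)))) + (1 - M * G) * (N * G)
          + (M * (1 - G * M)) * (Nᵀ * (Gᵀ * G)) := by
      rw [hE]; noncomm_ring
    rw [z2, zero_mul, add_zero] at stepA
    have hT1 : (M * (G * (Gᵀ * (Nᵀ * (1 - M * G)))))ᵀ = (1 - M * G) * (N * G) := by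
      simp only [transpose_mul, transpose_sub, transpose_one, transpose_transpose,
        Matrix.mul_assoc]
      rw [show Gᵀ * Mᵀ = M * G from hGt]
      rw [show G * (M * G) = G from hGP]
    have hT2 : ((1 - M * G) * (N * G))ᵀ = M * (G * (Gᵀ * (Nᵀ * (1 - M * G)))) := by
      have hU : M * (G * (Gᵀ * (Nᵀ * (1 - M * G)))) = Gᵀ * (Nᵀ * (1 - M * G)) := by
        calc M * (G * (Gᵀ * (Nᵀ * (1 - M * G))))
            = (M * G * Gᵀ) * (Nᵀ * (1 - M * G)) := by noncomm_ring
          _ = Gᵀ * (Nᵀ * (1 - M * G)) := by rw [hPGt]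
      rw [hU]
      simp only [transpose_mul, transpose_sub, transpose_one, transpose_transpose,
        Matrix.mul_assoc]
      rw [hGt]
    rw [stepA, transpose_add, hT1, hT2, add_comm]
  · have stepA : G * N + E * M
        = G * (N * (1 - G * M)) + (1 - G * M) * (Nᵀ * (Gᵀ * (G * M)))
          + (G * (Gᵀ * Nᵀ)) * ((1 - M * G) * M) := by
      rw [hE]; noncomm_ring
    rw [z1, mul_zero, add_zero, hQGt] at stepA
    have hT3 : (G * (N * (1 - G * M)))ᵀ = (1 - G * M) * (Nᵀ * Gᵀ) := by
      simp only [transpose_mul, transpose_sub, transpose_one, transpose_transpose,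
        Matrix.mul_assoc]
      rw [hMt]
    have hT4 : ((1 - G * M) * (Nᵀ * Gᵀ))ᵀ = G * (N * (1 - G * M)) := by
      simp only [transpose_mul, transpose_sub, transpose_one, transpose_transpose,
        Matrix.mul_assoc]
      rw [show Mᵀ * Gᵀ = G * M from hMt]
    rw [stepA, transpose_add, hT3, hT4, add_comm]

theorem stmt8 {n m : ℕ} (A B : Mat n) (hm : MatIndex A m)
    (Dh Ch : DM n)
    (hD : IsDualDrazin m (A, B) Dh) (hC : IsDualCEP m (A, B) Ch) :
    (∃ Ph : DM n, IsDualMP (dpow (A, B) m) Ph) ∧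
      ∀ Ph : DM n, IsDualMP (dpow (A, B) m) Ph →
        Ch = dmul Dh (dmul (dpow (A, B) m) Ph) := by
  classical
  constructor
  · -- Existence of the dual Moore-Penrose inverse of (A,B)^m
    obtain ⟨G, h1, h2, h3, h4⟩ := exists_MP (A ^ m)
    obtain ⟨hD1, hD2, hD3⟩ := hD
    set N : Mat n := (dpow ((A, B) : DM n) m).2 with hNdef
    set N' : Mat n := (dpow ((A, B) : DM n) (m+1)).2 with hN'def
    set D : Mat n := Dh.1 with hDdef
    set E0 : Mat n := Dh.2 with hE0def
    have efst : ∀ k : ℕ, (dpow ((A, B) : DM n) k).1 = A ^ k := fun k => dpow_fst_s8 (A, B) k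
    have hd1m : D * A ^ (m+1) = A ^ m := by
      have e := congrArg Prod.fst hD1
      simpa only [dmul, efst] using e
    have hdual : D * N' + E0 * A ^ (m+1) = N := by
      have e := congrArg Prod.snd hD1
      simpa only [dmul, efst] using e
    have hd2m : D * A * D = D := by
      have e := congrArg Prod.fst hD2
      simpa only [dmul] using e
    have hd3m : A * D = D * A := by
      have e := congrArg Prod.fst hD3
      simpa only [dmul] using e
    have hcAD : Commute A D := hd3m
    have Dk : ∀ k : ℕ, D * (A * D) ^ k = D := by
      intro k
      induction k with
      | zero => simp
      | succ k ih =>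
        rw [pow_succ, ← Matrix.mul_assoc, ih, ← Matrix.mul_assoc, hd2m]
    have hK0 : (A * D) ^ (m+1) = A * D := by
      rw [pow_succ', Matrix.mul_assoc, Dk m]
    have hK3 : A * D = A ^ (m+1) * D ^ (m+1) := by
      rw [← hcAD.mul_pow, hK0]
    have hK1 : A * D = A ^ m * (A * D ^ (m+1)) := by
      rw [hK3, pow_succ, Matrix.mul_assoc]
    have hK2 : A * D = (A * D ^ (m+1)) * A ^ m := by
      rw [hK3, pow_succ', Matrix.mul_assoc, (hcAD.pow_pow m (m+1)).eq, ← Matrix.mul_assoc]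
    have hKD : (A * D) * D = D := by rw [hd3m]; exact hd2m
    have hAK : A ^ (m+1) * (A * D) = A ^ (m+1) := by
      calc A ^ (m+1) * (A * D) = A * (A ^ (m+1) * D) := by
            rw [← Matrix.mul_assoc, ← pow_succ, pow_succ', Matrix.mul_assoc]
        _ = A * (D * A ^ (m+1)) := by rw [(hcAD.pow_left (m+1)).eq]
        _ = A * A ^ m := by rw [hd1m]
        _ = A ^ (m+1) := (pow_succ' A m).symm
    have z1' : (1 - A ^ m * G) * A ^ m = 0 := by rw [sub_mul, one_mul, h1, sub_self]
    have z2' : A ^ m * (1 - G * A ^ m) = 0 := by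
      rw [mul_sub, mul_one, ← Matrix.mul_assoc, h1, sub_self]
    have zK1 : (1 - A ^ m * G) * (A * D) = 0 := by
      rw [hK1, ← Matrix.mul_assoc, z1', zero_mul]
    have zK2 : (A * D) * (1 - G * A ^ m) = 0 := by
      rw [hK2, Matrix.mul_assoc, z2', mul_zero]
    have zd : (1 - A * D) * D = 0 := by rw [sub_mul, one_mul, hKD, sub_self]
    have za : A ^ (m+1) * (1 - A * D) = 0 := by rw [mul_sub, mul_one, hAK, sub_self]
    have hmid : (1 - A * D) * N * (1 - A * D) = 0 := by
      rw [← hdual]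
      calc (1 - A * D) * (D * N' + E0 * A ^ (m+1)) * (1 - A * D)
          = ((1 - A * D) * D) * (N' * (1 - A * D))
            + ((1 - A * D) * E0) * (A ^ (m+1) * (1 - A * D)) := by noncomm_ring
        _ = 0 := by rw [zd, za, zero_mul, mul_zero, add_zero]
    have e_left : (1 - A ^ m * G) * (1 - A * D) = 1 - A ^ m * G := by
      rw [mul_sub, mul_one, zK1, sub_zero]
    have e_right : (1 - A * D) * (1 - G * A ^ m) = 1 - G * A ^ m := by
      rw [sub_mul, one_mul, zK2, sub_zero]
    have hzero : (1 - A ^ m * G) * N * (1 - G * A ^ m) = 0 := by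
      calc (1 - A ^ m * G) * N * (1 - G * A ^ m)
          = ((1 - A ^ m * G) * (1 - A * D)) * N * ((1 - A * D) * (1 - G * A ^ m)) := by
            rw [e_left, e_right]
        _ = (1 - A ^ m * G) * ((1 - A * D) * N * (1 - A * D)) * (1 - G * A ^ m) := by
            noncomm_ring
        _ = 0 := by rw [hmid, mul_zero, zero_mul]
    obtain ⟨E, c1, c2, c3, c4⟩ := dualMP_core (A ^ m) N G h1 h2 h3 h4 hzero
    have hpair : dpow ((A, B) : DM n) m = (A ^ m, N) := Prod.ext (efst m) hNdef.symm
    refine ⟨(G, E), ?_, ?_, ?_, ?_⟩ <;> rw [hpair] <;>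
      simp only [dmul, dT, Prod.mk.injEq]
    · exact ⟨h1, c1⟩
    · exact ⟨h2, c2⟩
    · exact ⟨h3, c3⟩
    · exact ⟨h4, c4⟩
  · -- Uniqueness: the dual core-EP inverse equals Dh * (A,B)^m * Ph
    intro Ph hP
    have hcon := dual_cep_construct m (A, B) Dh Ph hD.1 hD.2.2 hP.1 hP.2.2.1
    exact dual_cep_unique m (A, B) Ch (dmul Dh (dmul (dpow (A, B) m) Ph))
      hC.1 hC.2.1 hC.2.2 hcon.1 hcon.2.1 hcon.2.2
end

section
/- Let Â = A + εB be a dual real n×n matrix with index of A equal to m, and suppose both the dual core-EP inverse Â^⊕ and the dual Drazin inverse Â^D exist. Then for any dual vector b̂ the dual linear system Â^{m+1} x̂ = Â^{2m}(Â^m)^† b̂ is consistent, and its general solution is x̂ = Â^⊕ b̂ + (I − Â^D Â) ŷ where ŷ ranges over all dual vectors; in particular, every solution has this form and every dual vector of this form is a solution. -/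
open Matrix

/-- A dual vector `x + ε x₀` represented as the pair `(x, x₀)`. -/
abbrev DV (n : ℕ) := (Fin n → ℝ) × (Fin n → ℝ)

/-- Action of a dual matrix on a dual vector. -/
def dmulVec {n : ℕ} (M : DM n) (x : DV n) : DV n :=
  (M.1.mulVec x.1, M.1.mulVec x.2 + M.2.mulVec x.1)

/-- Dual range of a dual matrix. -/
def DRange {n : ℕ} (M : DM n) : Set (DV n) :=
  {y | ∃ z w : Fin n → ℝ, y = (M.1.mulVec z, M.1.mulVec w + M.2.mulVec z)}

section Aux
variable {n : ℕ}

theorem dmul_assoc' (X Y Z : DM n) : dmul (dmul X Y) Z = dmul X (dmul Y Z) := by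
  simp only [dmul, Prod.mk.injEq, mul_add, add_mul, mul_assoc]
  refine ⟨trivial, ?_⟩
  abel

theorem dmul_one' (X : DM n) : dmul X ((1 : Mat n), (0 : Mat n)) = X := by
  simp [dmul]

theorem one_dmul' (X : DM n) : dmul (((1 : Mat n), (0 : Mat n)) : DM n) X = X := by
  simp [dmul]

theorem dT_dmul' (X Y : DM n) : dT (dmul X Y) = dmul (dT Y) (dT X) := by
  simp only [dT, dmul, Prod.mk.injEq, transpose_mul, transpose_add]
  refine ⟨trivial, ?_⟩
  abel

theorem dpow_succ' (X : DM n) (k : ℕ) : dpow X (k+1) = dmul (dpow X k) X := by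
  induction k with
  | zero => simp [dpow, dmul_one', one_dmul']
  | succ k ih =>
      show dmul X (dpow X (k+1)) = dmul (dpow X (k+1)) X
      conv_lhs => rw [ih]
      rw [← dmul_assoc']
      rfl

theorem dpow_add' (X : DM n) (j k : ℕ) :
    dpow X (j + k) = dmul (dpow X j) (dpow X k) := by
  induction k with
  | zero => simp [dpow, dmul_one']
  | succ k ih =>
      rw [← Nat.add_assoc, dpow_succ', ih, dpow_succ', dmul_assoc']

theorem dmul_sub' (X Y Z : DM n) : dmul X (Y - Z) = dmul X Y - dmul X Z := by
  simp only [dmul, Prod.fst_sub, Prod.snd_sub, mul_sub, Prod.mk_sub_mk, Prod.mk.injEq]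
  refine ⟨trivial, ?_⟩
  abel

theorem dmulVec_dmul' (M N : DM n) (x : DV n) :
    dmulVec (dmul M N) x = dmulVec M (dmulVec N x) := by
  simp only [dmulVec, dmul, Prod.mk.injEq, ← mulVec_mulVec, mulVec_add, add_mulVec]
  refine ⟨trivial, ?_⟩
  abel

theorem dmulVec_add' (M : DM n) (x y : DV n) :
    dmulVec M (x + y) = dmulVec M x + dmulVec M y := by
  simp only [dmulVec, Prod.fst_add, Prod.snd_add, mulVec_add, Prod.mk_add_mk,
    Prod.mk.injEq]
  refine ⟨trivial, ?_⟩
  abel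

theorem dmulVec_zero' (x : DV n) :
    dmulVec ((0 : DM n)) x = 0 := by
  simp [dmulVec]

theorem dmulVec_sub_one' (N : DM n) (x : DV n) :
    dmulVec ((((1 : Mat n), (0 : Mat n)) : DM n) - N) x = x - dmulVec N x := by
  rw [Prod.ext_iff]
  constructor
  · show (1 - N.1) *ᵥ x.1 = x.1 - N.1 *ᵥ x.1
    rw [sub_mulVec, one_mulVec]
  · show (1 - N.1) *ᵥ x.2 + (0 - N.2) *ᵥ x.1 = x.2 - (N.1 *ᵥ x.2 + N.2 *ᵥ x.1)
    rw [sub_mulVec, sub_mulVec, one_mulVec, zero_mulVec]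
    abel

end Aux

theorem stmt18 {n m : ℕ} (A B : Mat n) (hm : MatIndex A m)
    (Dh Ch Ph : DM n)
    (hD : IsDualDrazin m (A, B) Dh) (hC : IsDualCEP m (A, B) Ch)
    (hP : IsDualMP (dpow (A, B) m) Ph) :
    ∀ b x : DV n,
      dmulVec (dpow (A, B) (m+1)) x =
          dmulVec (dmul (dpow (A, B) (2 * m)) Ph) b ↔
        ∃ y : DV n,
          x = dmulVec Ch b +
              dmulVec ((((1 : Mat n), (0 : Mat n)) : DM n) - dmul Dh (A, B)) y := by
  intro b x
  set a : DM n := (A, B) with ha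
  obtain ⟨hD1, hD2, hD3⟩ := hD
  obtain ⟨hC1, hC2, hC3⟩ := hC
  obtain ⟨hP1, hP2, hP3, hP4⟩ := hP
  -- commutation of Dh with powers of a
  have comm : ∀ k, dmul (dpow a k) Dh = dmul Dh (dpow a k) := by
    intro k
    induction k with
    | zero =>
        rw [show dpow a 0 = (((1 : Mat n), (0 : Mat n)) : DM n) from rfl,
          one_dmul', dmul_one']
    | succ k ih =>
        calc dmul (dpow a (k+1)) Dh
            = dmul (dmul (dpow a k) a) Dh := by rw [dpow_succ' a k]
          _ = dmul (dpow a k) (dmul a Dh) := dmul_assoc' _ _ _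
          _ = dmul (dpow a k) (dmul Dh a) := by rw [hD3]
          _ = dmul (dmul (dpow a k) Dh) a := (dmul_assoc' _ _ _).symm
          _ = dmul (dmul Dh (dpow a k)) a := by rw [ih]
          _ = dmul Dh (dmul (dpow a k) a) := dmul_assoc' _ _ _
          _ = dmul Dh (dpow a (k+1)) := by rw [← dpow_succ' a k]
  have h2 : dmul (dpow a (m+1)) Dh = dpow a m := by rw [comm, hD1]
  -- Ch = a^k * Ch^(k+1)
  have h3 : ∀ k, dmul (dpow a k) (dmul Ch (dpow Ch k)) = Ch := by
    intro k
    induction k with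
    | zero =>
        rw [show dpow a 0 = (((1 : Mat n), (0 : Mat n)) : DM n) from rfl,
          show dpow Ch 0 = (((1 : Mat n), (0 : Mat n)) : DM n) from rfl,
          dmul_one', one_dmul']
    | succ k ih =>
        calc dmul (dpow a (k+1)) (dmul Ch (dpow Ch (k+1)))
            = dmul (dmul (dpow a k) a) (dmul Ch (dmul Ch (dpow Ch k))) := by
              rw [dpow_succ' a k]; rfl
          _ = dmul (dpow a k) (dmul a (dmul Ch (dmul Ch (dpow Ch k)))) :=
              dmul_assoc' _ _ _
          _ = dmul (dpow a k) (dmul a (dmul (dmul Ch Ch) (dpow Ch k))) := by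
              rw [dmul_assoc' Ch Ch (dpow Ch k)]
          _ = dmul (dpow a k) (dmul (dmul a (dmul Ch Ch)) (dpow Ch k)) := by
              rw [← dmul_assoc' a (dmul Ch Ch) (dpow Ch k)]
          _ = dmul (dpow a k) (dmul Ch (dpow Ch k)) := by rw [hC2]
          _ = Ch := ih
  -- (a*Ch) * a^m = a^m
  have hPM : dmul (dmul a Ch) (dpow a m) = dpow a m := by
    calc dmul (dmul a Ch) (dpow a m)
        = dmul (dmul a Ch) (dmul (dpow a (m+1)) Dh) := by rw [h2]
      _ = dmul a (dmul Ch (dmul (dpow a (m+1)) Dh)) := dmul_assoc' _ _ _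
      _ = dmul a (dmul (dmul Ch (dpow a (m+1))) Dh) :=
          (congrArg (dmul a) (dmul_assoc' _ _ _)).symm
      _ = dmul a (dmul (dpow a m) Dh) := by rw [hC3]
      _ = dmul (dmul a (dpow a m)) Dh := (dmul_assoc' _ _ _).symm
      _ = dmul (dpow a (m+1)) Dh := rfl
      _ = dpow a m := h2
  -- a*Ch factors through a^m
  have hfac : dmul a Ch = dmul (dpow a m) (dmul a (dmul Ch (dpow Ch m))) := by
    calc dmul a Ch
        = dmul a (dmul (dpow a m) (dmul Ch (dpow Ch m))) := by rw [h3 m]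
      _ = dmul (dmul a (dpow a m)) (dmul Ch (dpow Ch m)) := (dmul_assoc' _ _ _).symm
      _ = dmul (dmul (dpow a m) a) (dmul Ch (dpow Ch m)) := by
          rw [show dmul a (dpow a m) = dpow a (m+1) from rfl, dpow_succ' a m]
      _ = dmul (dpow a m) (dmul a (dmul Ch (dpow Ch m))) := dmul_assoc' _ _ _
  have hQP : dmul (dmul (dpow a m) Ph) (dmul a Ch) = dmul a Ch := by
    calc dmul (dmul (dpow a m) Ph) (dmul a Ch)
        = dmul (dmul (dpow a m) Ph)
            (dmul (dpow a m) (dmul a (dmul Ch (dpow Ch m)))) := by rw [← hfac]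
      _ = dmul (dmul (dmul (dpow a m) Ph) (dpow a m))
            (dmul a (dmul Ch (dpow Ch m))) := (dmul_assoc' _ _ _).symm
      _ = dmul (dpow a m) (dmul a (dmul Ch (dpow Ch m))) := by rw [hP1]
      _ = dmul a Ch := hfac.symm
  have hPQ : dmul (dmul a Ch) (dmul (dpow a m) Ph) = dmul (dpow a m) Ph := by
    calc dmul (dmul a Ch) (dmul (dpow a m) Ph)
        = dmul (dmul (dmul a Ch) (dpow a m)) Ph := (dmul_assoc' _ _ _).symm
      _ = dmul (dpow a m) Ph := by rw [hPM]
  -- key identity: a^m * Ph = a * Ch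
  have h4 : dmul (dpow a m) Ph = dmul a Ch := by
    calc dmul (dpow a m) Ph
        = dT (dmul (dpow a m) Ph) := hP3.symm
      _ = dT (dmul (dmul a Ch) (dmul (dpow a m) Ph)) := by rw [hPQ]
      _ = dmul (dT (dmul (dpow a m) Ph)) (dT (dmul a Ch)) := dT_dmul' _ _
      _ = dmul (dmul (dpow a m) Ph) (dmul a Ch) := by rw [hP3, hC1]
      _ = dmul a Ch := hQP
  have h5 : dmul (dpow a (m+1)) Ch = dmul (dpow a (2*m)) Ph := by
    calc dmul (dpow a (m+1)) Ch
        = dmul (dmul (dpow a m) a) Ch := by rw [dpow_succ' a m]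
      _ = dmul (dpow a m) (dmul a Ch) := dmul_assoc' _ _ _
      _ = dmul (dpow a m) (dmul (dpow a m) Ph) := by rw [h4]
      _ = dmul (dmul (dpow a m) (dpow a m)) Ph := (dmul_assoc' _ _ _).symm
      _ = dmul (dpow a (2*m)) Ph := by rw [two_mul, dpow_add']
  have h6 : dmul (dpow a (m+1))
      ((((1 : Mat n), (0 : Mat n)) : DM n) - dmul Dh a) = 0 := by
    rw [dmul_sub', dmul_one', ← dmul_assoc', h2, ← dpow_succ', sub_self]
  have h7 : ∀ k, dmul (dpow Dh (k+1)) (dpow a (k+1)) = dmul Dh a := by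
    intro k
    induction k with
    | zero =>
        show dmul (dmul Dh (dpow Dh 0)) (dmul a (dpow a 0)) = dmul Dh a
        rw [show dpow Dh 0 = (((1 : Mat n), (0 : Mat n)) : DM n) from rfl,
          show dpow a 0 = (((1 : Mat n), (0 : Mat n)) : DM n) from rfl,
          dmul_one', dmul_one']
    | succ k ih =>
        calc dmul (dpow Dh (k+2)) (dpow a (k+2))
            = dmul (dmul Dh (dpow Dh (k+1))) (dmul (dpow a (k+1)) a) := by
              rw [dpow_succ' a (k+1)]; rfl
          _ = dmul Dh (dmul (dpow Dh (k+1)) (dmul (dpow a (k+1)) a)) :=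
              dmul_assoc' _ _ _
          _ = dmul Dh (dmul (dmul (dpow Dh (k+1)) (dpow a (k+1))) a) := by
              rw [← dmul_assoc' (dpow Dh (k+1)) (dpow a (k+1)) a]
          _ = dmul Dh (dmul (dmul Dh a) a) := by rw [ih]
          _ = dmul Dh (dmul (dmul a Dh) a) := by rw [hD3]
          _ = dmul Dh (dmul a (dmul Dh a)) := by rw [dmul_assoc' a Dh a]
          _ = dmul (dmul Dh a) (dmul Dh a) := (dmul_assoc' _ _ _).symm
          _ = dmul (dmul (dmul Dh a) Dh) a := (dmul_assoc' _ _ _).symm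
          _ = dmul Dh a := by rw [hD2]
  have h9 : dmul (dmul Dh a) Ch = Ch := by
    calc dmul (dmul Dh a) Ch
        = dmul (dmul Dh a) (dmul (dpow a m) (dmul Ch (dpow Ch m))) := by
          rw [h3 m]
      _ = dmul Dh (dmul a (dmul (dpow a m) (dmul Ch (dpow Ch m)))) :=
          dmul_assoc' _ _ _
      _ = dmul Dh (dmul (dmul a (dpow a m)) (dmul Ch (dpow Ch m))) := by
          rw [← dmul_assoc' a (dpow a m)]
      _ = dmul (dmul Dh (dpow a (m+1))) (dmul Ch (dpow Ch m)) :=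
          (dmul_assoc' _ _ _).symm
      _ = dmul (dpow a m) (dmul Ch (dpow Ch m)) := by rw [hD1]
      _ = Ch := h3 m
  have h8 : dmul (dpow Dh (m+1)) (dmul (dpow a (2*m)) Ph) = Ch := by
    calc dmul (dpow Dh (m+1)) (dmul (dpow a (2*m)) Ph)
        = dmul (dpow Dh (m+1)) (dmul (dmul (dpow a m) (dpow a m)) Ph) := by
          rw [two_mul, dpow_add' a m m]
      _ = dmul (dpow Dh (m+1))
            (dmul (dmul (dmul (dpow a (m+1)) Dh) (dpow a m)) Ph) := by rw [h2]
      _ = dmul (dmul (dmul (dmul (dpow Dh (m+1)) (dpow a (m+1))) Dh)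
            (dpow a m)) Ph := by simp only [dmul_assoc']
      _ = dmul (dmul (dmul (dmul Dh a) Dh) (dpow a m)) Ph := by rw [h7 m]
      _ = dmul (dmul Dh (dpow a m)) Ph := by rw [hD2]
      _ = dmul Dh (dmul (dpow a m) Ph) := dmul_assoc' _ _ _
      _ = dmul Dh (dmul a Ch) := by rw [h4]
      _ = dmul (dmul Dh a) Ch := (dmul_assoc' _ _ _).symm
      _ = Ch := h9
  constructor
  · intro hx
    refine ⟨x, ?_⟩
    have hDax : dmulVec (dmul Dh a) x = dmulVec Ch b := by
      calc dmulVec (dmul Dh a) x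
          = dmulVec (dmul (dpow Dh (m+1)) (dpow a (m+1))) x := by rw [h7 m]
        _ = dmulVec (dpow Dh (m+1)) (dmulVec (dpow a (m+1)) x) :=
            dmulVec_dmul' _ _ _
        _ = dmulVec (dpow Dh (m+1)) (dmulVec (dmul (dpow a (2*m)) Ph) b) := by
            rw [hx]
        _ = dmulVec (dmul (dpow Dh (m+1)) (dmul (dpow a (2*m)) Ph)) b :=
            (dmulVec_dmul' _ _ _).symm
        _ = dmulVec Ch b := by rw [h8]
    rw [dmulVec_sub_one', hDax]
    abel
  · rintro ⟨y, rfl⟩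
    rw [dmulVec_add', ← dmulVec_dmul', ← dmulVec_dmul', h5, h6, dmulVec_zero',
      add_zero]
end
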